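/- Let A be a commutative unital ℂ-algebra, N ∈ ℕ, and suppose φ : A → ℂ is of the form φ(a) = ψ(a ⊗ ⋯ ⊗ a) (N-fold) for some linear map ψ : Sym^N(A) → ℂ, and φ(ab) = φ(a)φ(b) for all a, b ∈ A. Then ψ is an algebra homomorphism on Sym^N(A), where Sym^N(A) carries the commutative algebra structure with (a₁ ∨ ⋯ ∨ a_N)(b₁ ∨ ⋯ ∨ b_N) determined by factorwise multiplication of the underlying symmetric tensors. -/
import Mathlib


/-- Let `A` be a commutative unital `ℂ`-algebra and let `Sym^N(A)` be presented
abstractly as a commutative `ℂ`-algebra `S` together with a symmetric `N`-multilinear map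
`μ : A^N → S` multiplying factorwise, whose diagonal values `a^{∨N} = μ(a,…,a)` span `S`.
If `ψ : S → ℂ` is linear and `φ(a) := ψ(a ⊗ ⋯ ⊗ a)` satisfies `φ(ab) = φ(a)φ(b)`, then
`ψ` is multiplicative, i.e. an algebra homomorphism on `Sym^N(A)`. -/
theorem stmt6 {A S : Type*} [CommRing A] [Algebra ℂ A] [CommRing S] [Algebra ℂ S]
    (N : ℕ)
    (μ : MultilinearMap ℂ (fun _ : Fin N => A) S)
    (hsym : ∀ (σ : Equiv.Perm (Fin N)) (v : Fin N → A), μ (v ∘ σ) = μ v)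
    (hfact : ∀ v w : Fin N → A, μ v * μ w = μ (fun i => v i * w i))
    (hspan : Submodule.span ℂ {s : S | ∃ a : A, s = μ (fun _ => a)} = ⊤)
    (ψ : S →ₗ[ℂ] ℂ) (φ : A → ℂ)
    (hφ : ∀ a : A, φ a = ψ (μ (fun _ => a)))
    (hmul : ∀ a b : A, φ (a * b) = φ a * φ b) :
    ∀ x y : S, ψ (x * y) = ψ x * ψ y := by

  -- key: ψ(x*y) = ψ x * ψ y as a statement about linear maps in y for fixed x
  have key : ∀ x : S, (x ∈ {s : S | ∃ a : A, s = μ (fun _ => a)}) →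
      ∀ y : S, ψ (x * y) = ψ x * ψ y := by
    rintro x ⟨a, rfl⟩ y
    have h1 : ψ.comp (LinearMap.mul ℂ S (μ fun _ => a)) = ψ (μ fun _ => a) • ψ := by
      apply LinearMap.ext_on hspan
      rintro z ⟨b, rfl⟩
      simp only [LinearMap.comp_apply, LinearMap.mul_apply', LinearMap.smul_apply,
        smul_eq_mul]
      rw [hfact, ← hφ (a * b), ← hφ a, ← hφ b, hmul]
    have := LinearMap.congr_fun h1 y
    simpa using this
  intro x y
  have h2 : ψ.comp ((LinearMap.mul ℂ S).flip y) = ψ y • ψ := by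
    apply LinearMap.ext_on hspan
    rintro z hz
    simp only [LinearMap.comp_apply, LinearMap.flip_apply, LinearMap.mul_apply',
      LinearMap.smul_apply, smul_eq_mul]
    rw [key z hz y, mul_comm]
  have := LinearMap.congr_fun h2 x
  simpa [mul_comm] using this
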